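/- Let A, B, Δ be real symmetric n×n matrices with A positive semidefinite, Δ positive semidefinite, and B positive definite. Then det(B) · det(A + B + Δ) ≤ det(B + Δ) · det(A + B); equivalently, det(B)/det(A + B) ≤ det(B + Δ)/det(A + B + Δ), all four determinants being positive. -/

import Mathlib

open Matrix

open scoped MatrixOrder in
noncomputable def Matrix.PosSemidef.sqrt {n : ℕ} {E : Matrix (Fin n) (Fin n) ℝ}
    (_hE : E.PosSemidef) : Matrix (Fin n) (Fin n) ℝ := CFC.sqrt E

open scoped MatrixOrder in
lemma Matrix.PosSemidef.sqrt_mul_self {n : ℕ} {E : Matrix (Fin n) (Fin n) ℝ}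
    (hE : E.PosSemidef) : hE.sqrt * hE.sqrt = E := CFC.sqrt_mul_sqrt_self E hE.nonneg

open scoped MatrixOrder in
lemma Matrix.PosSemidef.posSemidef_sqrt {n : ℕ} {E : Matrix (Fin n) (Fin n) ℝ}
    (hE : E.PosSemidef) : hE.sqrt.PosSemidef := (CFC.sqrt_nonneg E).posSemidef

lemma one_le_det_one_add {n : ℕ} {P : Matrix (Fin n) (Fin n) ℝ} (hP : P.PosSemidef) :
    1 ≤ (1 + P).det := by
  have h := hP.isHermitian.spectral_theorem
  rw [Unitary.conjStarAlgAut_apply] at h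
  set U : Matrix (Fin n) (Fin n) ℝ := (hP.isHermitian.eigenvectorUnitary : Matrix (Fin n) (Fin n) ℝ) with hUdef
  have hU : U * star U = 1 := (Matrix.mem_unitaryGroup_iff).mp hP.isHermitian.eigenvectorUnitary.2
  set d : Fin n → ℝ := RCLike.ofReal ∘ hP.isHermitian.eigenvalues with hd
  have key : 1 + P = U * (1 + diagonal d) * star U := by
    rw [mul_add, add_mul, mul_one, hU, ← h]
  have heq : (1 + P).det = (1 + diagonal d).det := by
    rw [key, det_mul, det_mul, mul_comm U.det, mul_assoc, ← det_mul, hU, det_one, mul_one]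
  rw [heq, ← diagonal_one, diagonal_add, det_diagonal]
  calc (1:ℝ) = ∏ _i : Fin n, (1:ℝ) := by simp
    _ ≤ ∏ i : Fin n, (1 + d) i := by
        apply Finset.prod_le_prod
        · intro i _; norm_num
        · intro i _
          simp only [Pi.add_apply, Pi.one_apply, hd, Function.comp_apply,
            RCLike.ofReal_real_eq_id, id]
          linarith [hP.eigenvalues_nonneg i]

-- det ratio identity
lemma det_add_psd {n : ℕ} {W E : Matrix (Fin n) (Fin n) ℝ} (hW : W.PosDef) (hE : E.PosSemidef) :
    (W + E).det = W.det * (1 + hE.sqrt * W⁻¹ * hE.sqrt).det := by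
  have hWinv : IsUnit W.det := hW.det_pos.ne'.isUnit
  have h1 : W + E = W * (1 + W⁻¹ * hE.sqrt * hE.sqrt) := by
    rw [mul_add, mul_one, ← Matrix.mul_assoc, ← Matrix.mul_assoc,
      Matrix.mul_nonsing_inv _ hWinv, Matrix.one_mul, hE.sqrt_mul_self]
  rw [h1, det_mul]
  congr 1
  rw [det_one_add_mul_comm (W⁻¹ * hE.sqrt) hE.sqrt, ← Matrix.mul_assoc]

lemma det_le_det_add_psd {n : ℕ} {W E : Matrix (Fin n) (Fin n) ℝ} (hW : W.PosDef)
    (hE : E.PosSemidef) : W.det ≤ (W + E).det := by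
  rw [det_add_psd hW hE]
  have hP : (hE.sqrt * W⁻¹ * hE.sqrt).PosSemidef := by
    have := hW.inv.posSemidef.mul_mul_conjTranspose_same hE.sqrt
    rwa [hE.posSemidef_sqrt.isHermitian.eq] at this
  nlinarith [one_le_det_one_add hP, hW.det_pos]

lemma inv_sub_inv_psd {n : ℕ} {X A : Matrix (Fin n) (Fin n) ℝ}
    (hX : X.PosDef) (hA : A.PosSemidef) : (X⁻¹ - (X + A)⁻¹).PosSemidef := by
  have hY : (X + A).PosDef := hX.add_posSemidef hA
  have hXu : IsUnit X.det := hX.det_pos.ne'.isUnit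
  have hYu : IsUnit (X + A).det := hY.det_pos.ne'.isUnit
  have hmid : (X + A) * (X⁻¹ - (X + A)⁻¹) * (X + A) = A + A * X⁻¹ * A := by
    rw [Matrix.mul_sub, Matrix.mul_nonsing_inv _ hYu, Matrix.sub_mul, Matrix.one_mul]
    have e1 : (X + A) * X⁻¹ * (X + A) = X + A + (A + A * X⁻¹ * A) := by
      rw [Matrix.add_mul, Matrix.mul_nonsing_inv _ hXu, Matrix.add_mul,
        Matrix.one_mul, Matrix.mul_add,
        Matrix.nonsing_inv_mul_cancel_right _ _ hXu]
    rw [e1]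
    abel
  have key : X⁻¹ - (X + A)⁻¹ = (X + A)⁻¹ * (A + A * X⁻¹ * A) * (X + A)⁻¹ := by
    rw [← hmid, Matrix.mul_assoc (X + A) (X⁻¹ - (X + A)⁻¹) (X + A),
      Matrix.nonsing_inv_mul_cancel_left _ _ hYu,
      Matrix.mul_nonsing_inv_cancel_right _ _ hYu]
  rw [key]
  have hsum : (A + A * X⁻¹ * A).PosSemidef := by
    apply hA.add
    have := hX.inv.posSemidef.conjTranspose_mul_mul_same (B := A)
    rwa [hA.isHermitian.eq] at this
  have := hsum.conjTranspose_mul_mul_same (B := (X + A)⁻¹)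
  rwa [hY.inv.isHermitian.eq] at this

theorem stmt6 {n : ℕ} (A B Δ : Matrix (Fin n) (Fin n) ℝ)
    (hA : A.PosSemidef) (hΔ : Δ.PosSemidef) (hB : B.PosDef) :
    B.det * (A + B + Δ).det ≤ (B + Δ).det * (A + B).det := by
  have hY : (A + B).PosDef := Matrix.PosDef.posSemidef_add hA hB
  have h1 : (B + Δ).det = B.det * (1 + hΔ.sqrt * B⁻¹ * hΔ.sqrt).det := det_add_psd hB hΔ
  have h2 : (A + B + Δ).det = (A + B).det * (1 + hΔ.sqrt * (A + B)⁻¹ * hΔ.sqrt).det :=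
    det_add_psd hY hΔ
  rw [h1, h2]
  set S := hΔ.sqrt with hS
  set N := S * (A + B)⁻¹ * S with hN
  set M := S * B⁻¹ * S with hM
  have hNpsd : N.PosSemidef := by
    have := hY.inv.posSemidef.conjTranspose_mul_mul_same (B := S)
    rwa [hΔ.posSemidef_sqrt.isHermitian.eq] at this
  have hMN : (M - N).PosSemidef := by
    have hd : M - N = S * (B⁻¹ - (B + A)⁻¹) * S := by
      rw [Matrix.mul_sub, Matrix.sub_mul, hM, hN, add_comm B A]
    rw [hd]
    have := (inv_sub_inv_psd hB hA).conjTranspose_mul_mul_same (B := S)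
    rwa [hΔ.posSemidef_sqrt.isHermitian.eq] at this
  have h1N : (1 + N).PosDef := Matrix.PosDef.one.add_posSemidef hNpsd
  have hfin : (1 + N).det ≤ (1 + M).det := by
    have := det_le_det_add_psd h1N hMN
    have he : 1 + N + (M - N) = 1 + M := by abel
    rwa [he] at this
  have h3 := mul_le_mul_of_nonneg_left hfin (mul_pos hB.det_pos hY.det_pos).le
  nlinarith [h3]
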